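/- Fix n ≥ 2 and for i = 1,…,n let μᵢ > 0, σᵢ ≥ 0, νᵢ ≥ 0 with σᵢ² + νᵢ² > 0, δᵢ > 0, θᵢ ∈ [0,1], and suppose νᵢ² + σᵢ²(1 + θᵢ(1-δᵢ)/(n-1)) ≠ 0. Define φₙ = (1/n)·Σₖ δₖ σₖ μₖ / (νₖ² + σₖ²(1 + θₖ(1-δₖ)/(n-1))) and ψₙ = (1/(n-1))·Σₖ θₖ(1-δₖ) σₖ² / (νₖ² + σₖ²(1 + θₖ(1-δₖ)/(n-1))). If ψₙ ≠ 1, then the linear system πᵢ(νᵢ² + σᵢ²) = θᵢσᵢ(1-δᵢ)·(1/(n-1))·Σ_{k≠i} σₖπₖ + μᵢδᵢ, i = 1,…,n, has the unique solution πᵢ = (θᵢσᵢ(1-δᵢ)·(n/(n-1))·φₙ/(1-ψₙ) + μᵢδᵢ) / (νᵢ² + σᵢ²(1 + θᵢ(1-δᵢ)/(n-1))), and this solution satisfies (1/n)·Σₖ σₖπₖ = φₙ/(1-ψₙ). -/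

import Mathlib

theorem stmt11 (n : ℕ) (hn : 2 ≤ n)
    (μ σ ν δ θ : Fin n → ℝ)
    (hμ : ∀ i, 0 < μ i) (hσ : ∀ i, 0 ≤ σ i) (hν : ∀ i, 0 ≤ ν i)
    (hσν : ∀ i, 0 < σ i ^ 2 + ν i ^ 2)
    (hδ : ∀ i, 0 < δ i) (hθ : ∀ i, θ i ∈ Set.Icc (0:ℝ) 1)
    (hden : ∀ i, ν i ^ 2 + σ i ^ 2 * (1 + θ i * (1 - δ i) / ((n:ℝ) - 1)) ≠ 0)
    (φ ψ : ℝ)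
    (hφ : φ = (1/(n:ℝ)) * ∑ k, δ k * σ k * μ k /
      (ν k ^ 2 + σ k ^ 2 * (1 + θ k * (1 - δ k) / ((n:ℝ) - 1))))
    (hψ : ψ = (1/((n:ℝ)-1)) * ∑ k, θ k * (1 - δ k) * σ k ^ 2 /
      (ν k ^ 2 + σ k ^ 2 * (1 + θ k * (1 - δ k) / ((n:ℝ) - 1))))
    (hψ1 : ψ ≠ 1)
    (πs : Fin n → ℝ)
    (hπs : πs = fun i =>
      (θ i * σ i * (1 - δ i) * ((n:ℝ)/((n:ℝ)-1)) * (φ/(1-ψ)) + μ i * δ i) /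
      (ν i ^ 2 + σ i ^ 2 * (1 + θ i * (1 - δ i) / ((n:ℝ) - 1)))) :
    (∀ i, πs i * (ν i ^ 2 + σ i ^ 2) =
      θ i * σ i * (1 - δ i) * ((1/((n:ℝ)-1)) * ∑ k ∈ Finset.univ.erase i, σ k * πs k)
        + μ i * δ i) ∧
    ((1/(n:ℝ)) * ∑ k, σ k * πs k = φ/(1-ψ)) ∧
    (∀ π : Fin n → ℝ,
      (∀ i, π i * (ν i ^ 2 + σ i ^ 2) =
        θ i * σ i * (1 - δ i) * ((1/((n:ℝ)-1)) * ∑ k ∈ Finset.univ.erase i, σ k * π k)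
          + μ i * δ i) → π = πs) := by
  have h2 : (2:ℝ) ≤ (n:ℝ) := by exact_mod_cast hn
  have hn0 : (n:ℝ) ≠ 0 := by linarith
  have hn1 : ((n:ℝ) - 1) ≠ 0 := by linarith
  have hψ1' : (1:ℝ) - ψ ≠ 0 := sub_ne_zero.mpr (Ne.symm hψ1)
  have hE : ∀ k, ν k ^ 2 + σ k ^ 2 * (1 + θ k * (1 - δ k) / ((n:ℝ) - 1))
      = (((n:ℝ)-1) * (ν k ^ 2 + σ k ^ 2) + σ k ^ 2 * θ k * (1 - δ k)) / ((n:ℝ) - 1) := by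
    intro k; field_simp; ring
  have hE0 : ∀ k, ((n:ℝ)-1) * (ν k ^ 2 + σ k ^ 2) + σ k ^ 2 * θ k * (1 - δ k) ≠ 0 := by
    intro k h0
    apply hden k
    rw [hE k, h0, zero_div]
  set Φ := φ / (1 - ψ) with hΦdef
  have hΦ : Φ * (1 - ψ) = φ := div_mul_cancel₀ _ hψ1'
  have key : ∀ X : ℝ, (1/(n:ℝ)) * ∑ k, σ k *
      ((θ k * σ k * (1 - δ k) * ((n:ℝ)/((n:ℝ)-1)) * X + μ k * δ k) /
      (ν k ^ 2 + σ k ^ 2 * (1 + θ k * (1 - δ k) / ((n:ℝ) - 1)))) = X * ψ + φ := by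
    intro X
    rw [hφ, hψ]
    simp only [Finset.mul_sum]
    rw [← Finset.sum_add_distrib]
    refine Finset.sum_congr rfl fun k _ => ?_
    have h0 := hE0 k
    rw [hE k]
    field_simp
  have hS : (1/(n:ℝ)) * ∑ k, σ k * πs k = Φ := by
    simp only [hπs]
    rw [key Φ]
    linear_combination -hΦ
  have hsum : ∑ k, σ k * πs k = (n:ℝ) * Φ := by
    rw [← hS]; field_simp
  refine ⟨?_, hS, ?_⟩
  · intro i
    rw [Finset.sum_erase_eq_sub (Finset.mem_univ i), hsum]
    simp only [hπs]
    have h0 := hE0 i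
    rw [hE i]
    have h0' : ((n:ℝ) - 1) * (ν i ^ 2 + σ i ^ 2) + θ i * σ i ^ 2 * (1 - δ i) ≠ 0 := by
      convert h0 using 2; ring
    field_simp
    ring
  · intro π hπ
    set T := (1/(n:ℝ)) * ∑ k, σ k * π k with hT
    have hsumπ : ∑ k, σ k * π k = (n:ℝ) * T := by rw [hT]; field_simp
    have hπi : ∀ i, π i = (θ i * σ i * (1 - δ i) * ((n:ℝ)/((n:ℝ)-1)) * T + μ i * δ i) /
        (ν i ^ 2 + σ i ^ 2 * (1 + θ i * (1 - δ i) / ((n:ℝ) - 1))) := by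
      intro i
      have h := hπ i
      rw [Finset.sum_erase_eq_sub (Finset.mem_univ i), hsumπ] at h
      rw [eq_div_iff (hden i)]
      linear_combination h
    have h1 : T = T * ψ + φ := by
      conv_lhs => rw [hT]
      rw [Finset.sum_congr rfl fun k _ => by rw [hπi k]]
      exact key T
    have hTΦ : T = Φ := by
      rw [hΦdef, eq_div_iff hψ1']
      linear_combination h1
    funext i
    simp only [hπs]
    rw [hπi i, hTΦ]
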